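/- Let P be a polynomial with non-negative coefficients, K_j ≥ 0 with K_j ≤ e^(P(j)), and let κ₁ > κ > 1. Define C*_j = exp( κ^{-1}(ln 2 + P(0)) + Σ_{m=1}^{j} κ^{-m}(ln 2 + P(m)) ) and C*_∞ = lim_{j→∞} C*_j (which is finite). Suppose the sequence a_j ≥ 0 satisfies a_{j+1} ≤ K_j (a_j^κ + a_j^{κ₁}) for all j ≥ 0. If 0 ≤ C*_∞ · a_0 ≤ 1, then a_{j+1} ≤ (C*_∞ a_0)^(κ^j) for all j ≥ 0. -/

import Mathlib

/-- KAM rapid convergence: if `a_{j+1} ≤ K_j (a_j^κ + a_j^{κ₁})` with `κ₁ > κ > 1`,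
`K_j ≤ e^(P(j))`, and `C*_∞ a_0 ≤ 1` where
`C*_∞ = lim_j exp(κ⁻¹(ln 2 + P(0)) + Σ_{m=1}^j κ^{-m}(ln 2 + P(m)))`,
then `a_{j+1} ≤ (C*_∞ a_0)^(κ^j)` for all `j ≥ 0`. -/
theorem kam_rapid_iteration (κ κ₁ : ℝ) (hκ : 1 < κ) (hκ₁ : κ < κ₁)
    (P : Polynomial ℝ) (hP : ∀ i, 0 ≤ P.coeff i)
    (K : ℕ → ℝ) (hK : ∀ j : ℕ, 0 ≤ K j ∧ K j ≤ Real.exp (P.eval (j : ℝ)))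
    (a : ℕ → ℝ) (ha0 : ∀ j, 0 ≤ a j)
    (ha : ∀ j : ℕ, a (j + 1) ≤ K j * (a j ^ κ + a j ^ κ₁))
    (Cinf : ℝ)
    (hC : Filter.Tendsto (fun j : ℕ => Real.exp (κ⁻¹ * (Real.log 2 + P.eval 0) +
        ∑ m ∈ Finset.Icc 1 j, κ ^ (-(m : ℝ)) * (Real.log 2 + P.eval (m : ℝ))))
      Filter.atTop (nhds Cinf))
    (hnn : 0 ≤ Cinf * a 0) (hsmall : Cinf * a 0 ≤ 1) :
    ∀ j : ℕ, a (j + 1) ≤ (Cinf * a 0) ^ (κ ^ j) := by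
  have hκ0 : (0:ℝ) < κ := by linarith
  have hκne : κ ≠ 0 := ne_of_gt hκ0
  -- polynomial nonneg on nonneg
  have hPev : ∀ x : ℝ, 0 ≤ x → 0 ≤ P.eval x := by
    intro x hx
    rw [Polynomial.eval_eq_sum_range]
    exact Finset.sum_nonneg fun i _ => mul_nonneg (hP i) (pow_nonneg hx i)
  have hlog2 : (0:ℝ) ≤ Real.log 2 := Real.log_nonneg (by norm_num)
  set S : ℕ → ℝ := fun j => κ⁻¹ * (Real.log 2 + P.eval 0) +
      ∑ m ∈ Finset.Icc 1 j, κ ^ (-(m : ℝ)) * (Real.log 2 + P.eval (m : ℝ)) with hSdef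
  have hterm : ∀ m : ℕ, 0 ≤ κ ^ (-(m : ℝ)) * (Real.log 2 + P.eval (m : ℝ)) := by
    intro m
    have h1 : 0 ≤ P.eval ((m:ℕ):ℝ) := hPev _ (Nat.cast_nonneg m)
    exact mul_nonneg (Real.rpow_nonneg hκ0.le _) (by linarith)
  have hSmono : Monotone S := by
    intro i j hij
    simp only [hSdef]
    apply add_le_add_right
    exact Finset.sum_le_sum_of_subset_of_nonneg (Finset.Icc_subset_Icc_right hij)
      (fun m _ _ => hterm m)
  have hS0 : S 0 = κ⁻¹ * (Real.log 2 + P.eval 0) := by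
    simp [hSdef]
  have hSnn : ∀ j, 0 ≤ S j := by
    intro j
    have h0 : 0 ≤ S 0 := by
      rw [hS0]
      have := hPev 0 le_rfl
      positivity
    exact h0.trans (hSmono (Nat.zero_le j))
  have hCle : ∀ j, Real.exp (S j) ≤ Cinf := by
    intro j
    refine ge_of_tendsto hC ?_
    refine Filter.eventually_atTop.2 ⟨j, fun n hn => ?_⟩
    exact Real.exp_le_exp.2 (hSmono hn)
  have hC1 : (1:ℝ) ≤ Cinf := le_trans (Real.one_le_exp (hSnn 0)) (hCle 0)
  have ha0le1 : a 0 ≤ 1 := by nlinarith [ha0 0]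
  -- one-step inequality
  have hstep : ∀ j : ℕ, a j ≤ 1 →
      a (j + 1) ≤ Real.exp (Real.log 2 + P.eval (j : ℝ)) * a j ^ κ := by
    intro j hj1
    have h2 : 0 ≤ a j ^ κ := Real.rpow_nonneg (ha0 j) κ
    have h1 : a j ^ κ₁ ≤ a j ^ κ := by
      rcases eq_or_lt_of_le (ha0 j) with h | h
      · rw [← h, Real.zero_rpow (by linarith), Real.zero_rpow (by linarith)]
      · exact Real.rpow_le_rpow_of_exponent_ge h hj1 hκ₁.le
    have h3 : 0 ≤ a j ^ κ₁ := Real.rpow_nonneg (ha0 j) κ₁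
    have h4 : K j * (a j ^ κ + a j ^ κ₁) ≤ Real.exp (P.eval (j:ℝ)) * (2 * a j ^ κ) :=
      mul_le_mul (hK j).2 (by linarith) (by linarith) (Real.exp_nonneg _)
    calc a (j + 1) ≤ K j * (a j ^ κ + a j ^ κ₁) := ha j
      _ ≤ Real.exp (P.eval (j:ℝ)) * (2 * a j ^ κ) := h4
      _ = Real.exp (Real.log 2 + P.eval (j:ℝ)) * a j ^ κ := by
          rw [Real.exp_add, Real.exp_log two_pos]; ring
  -- main induction
  have key : ∀ j : ℕ, a (j + 1) ≤ (Real.exp (S j) * a 0) ^ (κ ^ (j + 1)) := by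
    intro j
    induction j with
    | zero =>
      have h := hstep 0 ha0le1
      have heq : (Real.exp (S 0) * a 0) ^ (κ ^ (0 + 1))
          = Real.exp (Real.log 2 + P.eval ((0:ℕ):ℝ)) * a 0 ^ κ := by
        rw [Real.mul_rpow (Real.exp_nonneg _) (ha0 0), pow_one,
          Real.rpow_def_of_pos (Real.exp_pos _), Real.log_exp, hS0]
        push_cast
        rw [inv_mul_eq_div, div_mul_cancel₀ _ hκne]
      rw [heq]
      exact h
    | succ j ih =>
      set E : ℝ := κ ^ (j + 1 + 1) with hE
      have hb0 : 0 ≤ Real.exp (S j) * a 0 := mul_nonneg (Real.exp_nonneg _) (ha0 0)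
      have hble : Real.exp (S j) * a 0 ≤ Cinf * a 0 :=
        mul_le_mul_of_nonneg_right (hCle j) (ha0 0)
      have hb1 : Real.exp (S j) * a 0 ≤ 1 := hble.trans hsmall
      have haj1 : a (j + 1) ≤ 1 :=
        ih.trans (Real.rpow_le_one hb0 hb1 (pow_nonneg hκ0.le _))
      have h := hstep (j + 1) haj1
      have hpow : a (j + 1) ^ κ ≤ (Real.exp (S j) * a 0) ^ E := by
        calc a (j + 1) ^ κ ≤ ((Real.exp (S j) * a 0) ^ (κ ^ (j + 1))) ^ κ :=
              Real.rpow_le_rpow (ha0 (j + 1)) ih hκ0.le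
          _ = (Real.exp (S j) * a 0) ^ E := by
              rw [← Real.rpow_mul hb0, hE, ← pow_succ]
      have hLnn : 0 ≤ Real.log 2 + P.eval ((j + 1 : ℕ) : ℝ) := by
        have := hPev ((j + 1 : ℕ) : ℝ) (Nat.cast_nonneg _)
        linarith
      have hSsucc : S (j + 1) = S j + κ ^ (-((j + 1 : ℕ) : ℝ)) *
          (Real.log 2 + P.eval ((j + 1 : ℕ) : ℝ)) := by
        simp only [hSdef]
        rw [Finset.sum_Icc_succ_top (by omega : 1 ≤ j + 1)]
        ring
      have hκinv : κ ^ (-((j + 1 : ℕ) : ℝ)) = (κ ^ (j + 1) : ℝ)⁻¹ := by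
        rw [Real.rpow_neg hκ0.le, Real.rpow_natCast]
      have hexp : Real.exp (Real.log 2 + P.eval ((j + 1 : ℕ) : ℝ)) * Real.exp (S j) ^ E
          ≤ Real.exp (S (j + 1)) ^ E := by
        rw [Real.rpow_def_of_pos (Real.exp_pos _), Real.rpow_def_of_pos (Real.exp_pos _),
          Real.log_exp, Real.log_exp, ← Real.exp_add, Real.exp_le_exp]
        have hmul : κ ^ (-((j + 1 : ℕ) : ℝ)) * E = κ := by
          rw [hκinv, hE]
          field_simp
          ring
        have : S (j + 1) * E = S j * E + κ * (Real.log 2 + P.eval ((j + 1 : ℕ) : ℝ)) := by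
          rw [hSsucc]
          rw [add_mul]
          congr 1
          rw [mul_comm (κ ^ (-((j + 1 : ℕ) : ℝ))) _, mul_assoc, hmul, mul_comm]
        rw [this]
        nlinarith [hLnn]
      calc a (j + 1 + 1) ≤ Real.exp (Real.log 2 + P.eval ((j + 1 : ℕ) : ℝ)) * a (j + 1) ^ κ := by
            exact_mod_cast h
        _ ≤ Real.exp (Real.log 2 + P.eval ((j + 1 : ℕ) : ℝ)) * ((Real.exp (S j) * a 0) ^ E) :=
            mul_le_mul_of_nonneg_left hpow (Real.exp_nonneg _)
        _ = Real.exp (Real.log 2 + P.eval ((j + 1 : ℕ) : ℝ)) * Real.exp (S j) ^ E * a 0 ^ E := by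
            rw [Real.mul_rpow (Real.exp_nonneg _) (ha0 0)]; ring
        _ ≤ Real.exp (S (j + 1)) ^ E * a 0 ^ E :=
            mul_le_mul_of_nonneg_right hexp (Real.rpow_nonneg (ha0 0) _)
        _ = (Real.exp (S (j + 1)) * a 0) ^ E := by
            rw [Real.mul_rpow (Real.exp_nonneg _) (ha0 0)]
  -- conclude
  intro j
  have hb0 : 0 ≤ Real.exp (S j) * a 0 := mul_nonneg (Real.exp_nonneg _) (ha0 0)
  have hble : Real.exp (S j) * a 0 ≤ Cinf * a 0 :=
    mul_le_mul_of_nonneg_right (hCle j) (ha0 0)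
  have h1 : a (j + 1) ≤ (Cinf * a 0) ^ (κ ^ (j + 1)) :=
    (key j).trans (Real.rpow_le_rpow hb0 hble (pow_nonneg hκ0.le _))
  rcases eq_or_lt_of_le hnn with h | h
  · rw [← h, Real.zero_rpow (by positivity : (κ:ℝ) ^ j ≠ 0)]
    rw [← h, Real.zero_rpow (by positivity : (κ:ℝ) ^ (j+1) ≠ 0)] at h1
    exact h1
  · refine h1.trans (Real.rpow_le_rpow_of_exponent_ge h hsmall ?_)
    exact pow_le_pow_right₀ hκ.le (Nat.le_succ j)
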